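/- arXiv:1805.09499 — 4 statements merged into one kernel-verified Lean document; each statement's English description precedes it below -/
import Mathlib

section
/- There exists a strictly increasing continuous function 𝔰 on J such that the Stieltjes measure d𝔰 satisfies d𝔰(J) < ε, d𝔰 is absolutely continuous with respect to d𝚜, and the Radon–Nikodym derivative d𝔰/d𝚜 equals 0 or 1, d𝚜-almost everywhere on J. -/
set_option maxHeartbeats 1000000

open MeasureTheory Set ENNReal Filter Topology

section CDF
/-- The CDF of a finite measure on `ℝ`, as a Stieltjes function. -/
noncomputable def myCdf (ν : Measure ℝ) [IsFiniteMeasure ν] : StieltjesFunction ℝ where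
  toFun x := (ν (Iic x)).toReal
  mono' a b hab :=
    ENNReal.toReal_mono (measure_ne_top ν _) (measure_mono (Iic_subset_Iic.2 hab))
  right_continuous' := by
    intro x
    have hseq : Tendsto (fun n : ℕ => ν (Iic (x + 1 / (n + 1)))) atTop (𝓝 (ν (Iic x))) := by
      have hanti : Antitone (fun n : ℕ => Iic (x + 1 / ((n : ℝ) + 1))) := by
        intro m n hmn
        refine Iic_subset_Iic.2 (add_le_add_right ?_ x)
        apply one_div_le_one_div_of_le (by positivity)
        exact_mod_cast add_le_add_left (Nat.cast_le.2 hmn) 1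
      have h1 := tendsto_measure_iInter_atTop (μ := ν)
        (s := fun n : ℕ => Iic (x + 1 / ((n : ℝ) + 1)))
        (fun n => measurableSet_Iic.nullMeasurableSet) hanti ⟨0, measure_ne_top ν _⟩
      have h2 : (⋂ n : ℕ, Iic (x + 1 / ((n : ℝ) + 1))) = Iic x := by
        ext z
        simp only [mem_iInter, mem_Iic]
        constructor
        · intro h
          have hlim : Tendsto (fun n : ℕ => x + 1 / ((n : ℝ) + 1)) atTop (𝓝 x) := by
            have := tendsto_one_div_add_atTop_nhds_zero_nat (𝕜 := ℝ)
            simpa using (tendsto_const_nhds (x := x)).add this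
          exact ge_of_tendsto' hlim h
        · intro h n
          have : (0:ℝ) ≤ 1 / ((n : ℝ) + 1) := by positivity
          linarith
      rw [h2] at h1
      exact h1
    have htt : Tendsto (fun n : ℕ => (ν (Iic (x + 1 / (n + 1)))).toReal) atTop
        (𝓝 ((ν (Iic x)).toReal)) :=
      (ENNReal.tendsto_toReal (measure_ne_top ν _)).comp hseq
    rw [ContinuousWithinAt]
    apply tendsto_order.2
    constructor
    · intro a ha
      filter_upwards [self_mem_nhdsWithin] with z hz
      exact lt_of_lt_of_le ha
        (ENNReal.toReal_mono (measure_ne_top ν _) (measure_mono (Iic_subset_Iic.2 hz)))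
    · intro b hb
      have hev : ∀ᶠ n : ℕ in atTop, (ν (Iic (x + 1 / (n + 1)))).toReal < b :=
        htt.eventually (eventually_lt_nhds hb)
      obtain ⟨n, hn⟩ := hev.exists
      have hxn : x < x + 1 / ((n : ℝ) + 1) := lt_add_of_pos_right x (by positivity)
      filter_upwards [mem_nhdsWithin_of_mem_nhds (Iio_mem_nhds hxn)] with z hz
      exact lt_of_le_of_lt
        (ENNReal.toReal_mono (measure_ne_top ν _) (measure_mono (Iic_subset_Iic.2 hz.le))) hn

lemma myCdf_apply (ν : Measure ℝ) [IsFiniteMeasure ν] (x : ℝ) :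
    myCdf ν x = (ν (Iic x)).toReal := rfl

lemma myCdf_measure (ν : Measure ℝ) [IsFiniteMeasure ν] : (myCdf ν).measure = ν := by
  refine Measure.ext_of_Ioc _ _ fun a b hab => ?_
  rw [StieltjesFunction.measure_Ioc, myCdf_apply, myCdf_apply]
  have hsplit : ν (Iic b) = ν (Iic a) + ν (Ioc a b) := by
    rw [← Iic_union_Ioc_eq_Iic hab.le, measure_union (Iic_disjoint_Ioc le_rfl) measurableSet_Ioc]
  rw [hsplit, ENNReal.toReal_add (measure_ne_top ν _) (measure_ne_top ν _),
    add_sub_cancel_left, ENNReal.ofReal_toReal (measure_ne_top ν _)]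
end CDF

/-- For a scale function `𝚜` (strictly increasing, continuous) on an interval `J` and `ε > 0`,
there exists a scale function `𝔰` on `J` with `d𝔰(J) < ε`, `d𝔰 ≪ d𝚜` on `J`, and
`d𝔰/d𝚜 = 0` or `1`, `d𝚜`-a.e. on `J`. -/
theorem stmt_0 (J : Set ℝ) (hJ : J.OrdConnected) (s : StieltjesFunction ℝ)
    (hs_mono : StrictMonoOn s J) (hs_cont : ContinuousOn s J)
    (ε : ℝ≥0∞) (hε : 0 < ε) :
    ∃ f : StieltjesFunction ℝ, StrictMonoOn f J ∧ ContinuousOn f J ∧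
      f.measure J < ε ∧
      (f.measure.restrict J) ≪ (s.measure.restrict J) ∧
      (∀ᵐ x ∂(s.measure.restrict J),
        (f.measure.restrict J).rnDeriv (s.measure.restrict J) x = 0 ∨
        (f.measure.restrict J).rnDeriv (s.measure.restrict J) x = 1) := by
  classical
  set μ := s.measure with hμdef
  set ε' := min ε 1 with hε'def
  have hε'0 : ε' ≠ 0 := (lt_min hε zero_lt_one).ne'
  have hε'top : ε' ≠ ⊤ := ne_top_of_le_ne_top one_ne_top (min_le_right _ _)
  let e : ℕ ≃ ℚ × ℚ := (Denumerable.eqv (ℚ × ℚ)).symm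
  let bound : ℕ → ℝ≥0∞ := fun n => ε' * 2⁻¹ ^ (n + 2)
  have hbound0 : ∀ n, bound n ≠ 0 := by
    intro n
    exact mul_ne_zero hε'0 (pow_ne_zero _ (by simp))
  have hboundtop : ∀ n, bound n ≠ ⊤ := by
    intro n
    exact ENNReal.mul_ne_top hε'top (ENNReal.pow_ne_top (by simp))
  let P : ℕ → Prop := fun n => ∃ c d : ℝ, c ∈ J ∧ d ∈ J ∧ (((e n).1 : ℚ) : ℝ) < c ∧ c < d ∧
    d < (((e n).2 : ℚ) : ℝ) ∧ μ (Ioc c d) < bound n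
  let T : ℕ → Set ℝ := fun n => if h : P n then Ioc h.choose h.choose_spec.choose else ∅
  have hTspec : ∀ n (h : P n), T n = Ioc h.choose h.choose_spec.choose := by
    intro n h; simp only [T, dif_pos h]
  have hTJ : ∀ n, T n ⊆ J := by
    intro n
    by_cases h : P n
    · rw [hTspec n h]
      obtain ⟨h1, h2, -⟩ := h.choose_spec.choose_spec
      exact Ioc_subset_Icc_self.trans (hJ.out h1 h2)
    · simp [T, h]
  have hTm : ∀ n, MeasurableSet (T n) := by
    intro n
    by_cases h : P n
    · rw [hTspec n h]; exact measurableSet_Ioc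
    · simp [T, h]
  have hTb : ∀ n, μ (T n) ≤ bound n := by
    intro n
    by_cases h : P n
    · rw [hTspec n h]
      obtain ⟨-, -, -, -, -, h6⟩ := h.choose_spec.choose_spec
      exact h6.le
    · simp [T, h]
  set A := ⋃ n, T n with hAdef
  have hAm : MeasurableSet A := MeasurableSet.iUnion hTm
  have hAJ : A ⊆ J := iUnion_subset hTJ
  have hAle : μ A ≤ ε' / 2 := by
    calc μ A ≤ ∑' n, μ (T n) := measure_iUnion_le _
    _ ≤ ∑' n, bound n := ENNReal.tsum_le_tsum hTb
    _ = ε' * ∑' n : ℕ, 2⁻¹ ^ (n + 2) := ENNReal.tsum_mul_left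
    _ = ε' / 2 := by
        have : ∑' n : ℕ, (2⁻¹ : ℝ≥0∞) ^ (n + 2) = 2⁻¹ := by
          simp_rw [pow_add]
          rw [ENNReal.tsum_mul_right, ENNReal.tsum_geometric, ENNReal.one_sub_inv_two, inv_inv,
            pow_two, ← mul_assoc, ENNReal.mul_inv_cancel two_ne_zero ENNReal.ofNat_ne_top, one_mul]
        rw [this, ENNReal.div_eq_inv_mul, mul_comm]
  have hAtop : μ A ≠ ⊤ := by
    refine ne_top_of_le_ne_top ?_ hAle
    simp [ENNReal.div_eq_top, hε'top]
  have hAlt : μ A < ε := by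
    refine lt_of_le_of_lt hAle (lt_of_lt_of_le (ENNReal.half_lt_self hε'0 hε'top) (min_le_left _ _))
  -- density of A in every subinterval of J
  have hAdense : ∀ x ∈ J, ∀ y ∈ J, x < y → 0 < μ (A ∩ Ioc x y) := by
    intro x hx y hy hxy
    obtain ⟨p, hxp, hpy⟩ := exists_rat_btwn hxy
    obtain ⟨q, hpq, hqy⟩ := exists_rat_btwn hpy
    set n := e.symm (p, q) with hn
    have hen : e n = (p, q) := Equiv.apply_symm_apply _ _
    have hpq' : ((p:ℚ):ℝ) < ((q:ℚ):ℝ) := hpq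
    set c : ℝ := ((p : ℝ) + (q : ℝ)) / 2 with hc
    have hpc : (p:ℝ) < c := by rw [hc]; linarith
    have hcq : c < (q:ℝ) := by rw [hc]; linarith
    have hcJ : c ∈ J := hJ.out hx hy ⟨by linarith, by linarith⟩
    have hr : (0:ℝ) < (bound n).toReal := ENNReal.toReal_pos (hbound0 n) (hboundtop n)
    have ht : Tendsto s (𝓝[>] c) (𝓝 (s c)) :=
      (s.right_continuous c).mono_left (nhdsWithin_mono c Ioi_subset_Ici_self)
    have h1 : ∀ᶠ d in 𝓝[>] c, s d < s c + (bound n).toReal :=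
      ht.eventually (eventually_lt_nhds (lt_add_of_pos_right _ hr))
    have h2 : ∀ᶠ d in 𝓝[>] c, d < (q:ℝ) :=
      eventually_nhdsWithin_of_eventually_nhds (eventually_lt_nhds hcq)
    have h3 : ∀ᶠ d in 𝓝[>] c, c < d := eventually_mem_nhdsWithin
    obtain ⟨d, hd1, hd2, hd3⟩ := (h1.and (h2.and h3)).exists
    have hdJ : d ∈ J := hJ.out hx hy ⟨by linarith, by linarith⟩
    have hPn : P n := by
      refine ⟨c, d, hcJ, hdJ, ?_, hd3, ?_, ?_⟩
      · rw [hen]; exact hpc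
      · rw [hen]; exact hd2
      · rw [hμdef, s.measure_Ioc]
        exact (ENNReal.ofReal_lt_iff_lt_toReal (sub_nonneg.2 (s.mono hd3.le))
          (hboundtop n)).2 (by linarith)
    obtain ⟨hc'J, hd'J, hpc', hc'd', hd'q, -⟩ := hPn.choose_spec.choose_spec
    have hp1 : (((e n).1 : ℚ) : ℝ) = (p : ℝ) := by rw [hen]
    have hq2 : (((e n).2 : ℚ) : ℝ) = (q : ℝ) := by rw [hen]
    have hsub : T n ⊆ Ioc x y := by
      rw [hTspec n hPn]
      intro z hz
      have hz1 := hz.1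
      have hz2 := hz.2
      exact ⟨by linarith, by linarith⟩
    have hpos : 0 < μ (T n) := by
      rw [hTspec n hPn]
      calc (0:ℝ≥0∞) < ENNReal.ofReal (s hPn.choose_spec.choose - s hPn.choose) :=
            ENNReal.ofReal_pos.2 (sub_pos.2 (hs_mono hc'J hd'J hc'd'))
        _ = μ (Ioc hPn.choose hPn.choose_spec.choose) := (s.measure_Ioc _ _).symm
    exact hpos.trans_le (measure_mono (subset_inter (subset_iUnion T n) hsub))
  -- no atoms on A
  have hAatom : ∀ x ∈ A, μ {x} = 0 := by
    intro x hxA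
    obtain ⟨n, hxn⟩ := mem_iUnion.1 hxA
    have hPn : P n := by
      by_contra h
      simp only [T, dif_neg h] at hxn
      exact hxn
    rw [hTspec n hPn] at hxn
    obtain ⟨hc'J, hd'J, -, -, -, -⟩ := hPn.choose_spec.choose_spec
    have hcx : hPn.choose < x := hxn.1
    have hxJ : x ∈ J := hJ.out hc'J hd'J ⟨hxn.1.le, hxn.2⟩
    have hIoo : Ioo hPn.choose x ⊆ J := fun z hz =>
      hJ.out hc'J hxJ ⟨hz.1.le, hz.2.le⟩
    have hts : Tendsto s (𝓝[<] x) (𝓝 (s x)) := by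
      rw [← nhdsWithin_Ioo_eq_nhdsLT hcx]
      exact (hs_cont x hxJ).mono_left (nhdsWithin_mono x hIoo)
    have hll : Function.leftLim s x = s x :=
      leftLim_eq_of_tendsto hts
    rw [hμdef, s.measure_singleton, hll, sub_self, ENNReal.ofReal_zero]
  set ν := μ.restrict A with hνdef
  haveI : IsFiniteMeasure ν := ⟨by
    rw [hνdef, Measure.restrict_apply_univ]
    exact hAtop.lt_top⟩
  have hνsing : ∀ x, ν {x} = 0 := by
    intro x
    rw [hνdef, Measure.restrict_apply (measurableSet_singleton x)]
    by_cases hx : x ∈ A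
    · rw [inter_eq_left.mpr (singleton_subset_iff.2 hx)]
      exact hAatom x hx
    · rw [singleton_inter_eq_empty.2 hx, measure_empty]
  set f := myCdf ν with hfdef
  have hfm : f.measure = ν := myCdf_measure ν
  have hνIoc : ∀ x y : ℝ, ν (Ioc x y) = μ (A ∩ Ioc x y) := by
    intro x y
    rw [hνdef, Measure.restrict_apply measurableSet_Ioc, inter_comm]
  -- restriction identities
  have hres : f.measure.restrict J = μ.restrict A := by
    rw [hfm, hνdef, Measure.restrict_restrict hJ.measurableSet,
      inter_eq_right.mpr hAJ]
  have hres2 : (μ.restrict J).restrict A = μ.restrict A := by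
    rw [Measure.restrict_restrict hAm, inter_eq_left.mpr hAJ]
  have hwd : f.measure.restrict J = (μ.restrict J).withDensity (A.indicator 1) := by
    rw [withDensity_indicator_one hAm, hres2, hres]
  refine ⟨f, ?_, ?_, ?_, ?_, ?_⟩
  · -- StrictMonoOn
    intro x hx y hy hxy
    have hpos : 0 < ν (Ioc x y) := by rw [hνIoc]; exact hAdense x hx y hy hxy
    have hsplit : ν (Iic y) = ν (Iic x) + ν (Ioc x y) := by
      rw [← Iic_union_Ioc_eq_Iic hxy.le,
        measure_union (Iic_disjoint_Ioc le_rfl) measurableSet_Ioc]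
    show (ν (Iic x)).toReal < (ν (Iic y)).toReal
    apply ENNReal.toReal_strict_mono (measure_ne_top ν _)
    rw [hsplit]
    exact ENNReal.lt_add_right (measure_ne_top ν _) hpos.ne'
  · -- ContinuousOn
    intro x hx
    apply ContinuousAt.continuousWithinAt
    rw [f.mono.continuousAt_iff_leftLim_eq_rightLim]
    have hright : Function.rightLim f x = f x :=
      rightLim_eq_of_tendsto
        ((f.right_continuous x).mono_left (nhdsWithin_mono x Ioi_subset_Ici_self))
    have hsing : f.measure {x} = 0 := by rw [hfm]; exact hνsing x
    rw [StieltjesFunction.measure_singleton, ENNReal.ofReal_eq_zero] at hsing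
    have hle : Function.leftLim f x ≤ f x := f.mono.leftLim_le le_rfl
    have hleft : Function.leftLim f x = f x := le_antisymm hle (by linarith)
    rw [hleft, hright]
  · -- measure J < ε
    have : f.measure J = μ A := by
      rw [hfm, hνdef, Measure.restrict_apply hJ.measurableSet, inter_eq_right.mpr hAJ]
    rw [this]
    exact hAlt
  · -- absolutely continuous
    rw [hwd]
    exact withDensity_absolutelyContinuous _ _
  · -- rnDeriv is 0 or 1
    have hrn := Measure.rnDeriv_withDensity (μ.restrict J)
      (measurable_one.indicator hAm)
    rw [hwd]
    filter_upwards [hrn] with x hx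
    rw [hx]
    by_cases hxA : x ∈ A
    · right; simp [indicator_of_mem hxA]
    · left; simp [indicator_of_notMem hxA]
end

section
/- If 𝚜 is a strictly increasing continuous function on J, G is a dense open subset of J, e ∈ J is fixed, and 𝔰(x) := ∫_e^x 1_G(y) d𝚜(y), then 𝔰 is strictly increasing on J. -/
open MeasureTheory Set ENNReal

/-- If `𝚜` is a strictly increasing continuous function on an interval `J`, `G` is a dense
open subset of `J`, `e ∈ J`, and `𝔰(x) = ∫_e^x 1_G(y) d𝚜(y)`, then `𝔰` is strictly
increasing on `J`. -/
theorem stmt_2 (J : Set ℝ) (hJ : J.OrdConnected) (s : StieltjesFunction ℝ)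
    (hs_mono : StrictMonoOn s J) (hs_cont : ContinuousOn s J)
    (G : Set ℝ) (hGJ : G ⊆ J)
    (hG_open : ∃ U : Set ℝ, IsOpen U ∧ G = U ∩ J)
    (hG_dense : J ⊆ closure G)
    (e : ℝ) (he : e ∈ J)
    (f : ℝ → ℝ)
    (hf : ∀ x, f x = ∫ y in e..x, G.indicator (fun _ => (1 : ℝ)) y ∂s.measure) :
    StrictMonoOn f J := by
  obtain ⟨U, hU, hGU⟩ := hG_open
  have hGm : MeasurableSet G := hGU ▸ (hU.measurableSet.inter hJ.measurableSet)
  set g : ℝ → ℝ := G.indicator (fun _ => (1 : ℝ)) with hg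
  have hIo : ∀ x y : ℝ, IntegrableOn g (Ioc x y) s.measure := by
    intro x y
    rw [IntegrableOn, hg, integrable_indicator_iff hGm]
    refine (integrableOn_const_iff (C := (1 : ℝ))).2 (Or.inr ?_)
    rw [Measure.restrict_apply hGm]
    exact lt_of_le_of_lt (measure_mono inter_subset_right) measure_Ioc_lt_top
  have hint : ∀ x y : ℝ, IntervalIntegrable g s.measure x y := fun x y => ⟨hIo x y, hIo y x⟩
  intro a ha b hb hab
  have hIJ : Ioo a b ⊆ J := hJ.out ha hb |>.trans' Ioo_subset_Icc_self
  -- find an interval inside G ∩ Ioo a b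
  have hm : (a + b) / 2 ∈ Ioo a b := ⟨by linarith, by linarith⟩
  have hmem : ((a + b) / 2 : ℝ) ∈ closure G := hG_dense (hIJ hm)
  obtain ⟨c, hcG, hcI⟩ : (G ∩ Ioo a b).Nonempty := by
    rcases mem_closure_iff.1 hmem (Ioo a b) isOpen_Ioo hm with ⟨c, hc1, hc2⟩
    exact ⟨c, hc2, hc1⟩
  obtain ⟨δ, hδ, hball⟩ := Metric.isOpen_iff.1 (hU.inter isOpen_Ioo)
    c ⟨(hGU ▸ hcG).1, hcI⟩
  have hsub : Ioo (c - δ) (c + δ) ⊆ G ∩ Ioo a b := by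
    intro x hx
    have : x ∈ U ∩ Ioo a b := hball (by
      simp only [Metric.mem_ball, Real.dist_eq, abs_lt]
      constructor <;> [linarith [hx.1]; linarith [hx.2]])
    exact ⟨hGU ▸ ⟨this.1, hIJ this.2⟩, this.2⟩
  have hpos : 0 < s.measure (G ∩ Ioc a b) := by
    calc 0 < s.measure (Ioo (c - δ) (c + δ)) := by
          rw [s.measure_Ioo]
          have h1 : c - δ / 2 ∈ J := hIJ (hsub ⟨by linarith, by linarith⟩).2
          have h2 : c + δ / 2 ∈ J := hIJ (hsub ⟨by linarith, by linarith⟩).2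
          have h3 : s (c - δ) ≤ s (c - δ / 2) := s.mono (by linarith)
          have h4 : s (c - δ / 2) < s (c + δ / 2) := hs_mono h1 h2 (by linarith)
          have h5 : s (c + δ / 2) ≤ Function.leftLim s (c + δ) := s.mono.le_leftLim (by linarith)
          exact ENNReal.ofReal_pos.2 (by linarith)
      _ ≤ s.measure (G ∩ Ioc a b) := measure_mono
          (hsub.trans (inter_subset_inter_right _ Ioo_subset_Ioc_self))
  have hfin : s.measure (G ∩ Ioc a b) ≠ ∞ :=
    ((measure_mono inter_subset_right).trans_lt measure_Ioc_lt_top).ne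
  have hdiff : f b = f a + (s.measure (G ∩ Ioc a b)).toReal := by
    rw [hf a, hf b, ← intervalIntegral.integral_add_adjacent_intervals (hint e a) (hint a b)]
    congr 1
    rw [intervalIntegral.integral_of_le hab.le, hg, integral_indicator hGm,
      Measure.restrict_restrict hGm, setIntegral_const, smul_eq_mul, mul_one, measureReal_def]
  rw [hdiff]
  linarith [ENNReal.toReal_pos hpos.ne' hfin]
end

section
/- Let {I_n : n ≥ 1} be at most countably many pairwise disjoint intervals contained in [a,b] such that every I_n is closed and the complement [a,b] \ ⋃_n I_n contains no nonempty open interval (i.e., the union of the I_n is dense in [a,b]). If there are at least two distinct intervals I_i, I_j with I_i lying strictly to the left of I_j and infinitely many intervals I_n lie between them, then [a,b] \ ⋃_n I_n is uncountable. -/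
open Set

/-- Cantor-type structure: if `{[A n, B n]}` are pairwise disjoint closed subintervals of
`[a,b]` whose union leaves no nonempty open interval uncovered, and infinitely many of them
lie between two distinct intervals `[A i, B i]` and `[A j, B j]` (the first strictly to the
left of the second), then `[a,b] \ ⋃ n [A n, B n]` is uncountable. -/
theorem stmt_4 (a b : ℝ) (A B : ℕ → ℝ)
    (hAB : ∀ n, A n ≤ B n)
    (hsub : ∀ n, Icc (A n) (B n) ⊆ Icc a b)
    (hdisj : Pairwise (Function.onFun Disjoint (fun n => Icc (A n) (B n))))
    (hdense : ∀ c d : ℝ, c < d → ¬ (Ioo c d ⊆ Icc a b \ ⋃ n, Icc (A n) (B n)))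
    (i j : ℕ) (hij : i ≠ j) (hlt : B i < A j)
    (hinf : {n : ℕ | B i < A n ∧ B n < A j}.Infinite) :
    ¬ (Icc a b \ ⋃ n, Icc (A n) (B n)).Countable := by
  intro hcount
  set E : Set ℝ := Icc (B i) (A j) \ ⋃ n, Ioo (A n) (B n) with hE
  have hdisj' : ∀ {m n : ℕ} {x : ℝ}, m ≠ n → x ∈ Icc (A m) (B m) → x ∈ Icc (A n) (B n) → False :=
    fun h hm hn => Set.disjoint_left.mp (hdisj h) hm hn
  -- endpoints of intervals are not in the union of open interiors
  have hnotS : ∀ (n : ℕ) (x : ℝ), x ∈ Icc (A n) (B n) → x ∉ Ioo (A n) (B n) →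
      x ∉ ⋃ m, Ioo (A m) (B m) := by
    intro n x hxI hxO hx
    rcases mem_iUnion.mp hx with ⟨m, hm⟩
    rcases eq_or_ne m n with rfl | hmn
    · exact hxO hm
    · exact hdisj' hmn (Ioo_subset_Icc_self hm) hxI
  have hclosed : IsClosed E := (isClosed_Icc).sdiff (isOpen_iUnion fun n => isOpen_Ioo)
  -- the key right-approximation lemma
  have hright : ∀ x ∈ E, x < A j → ∀ ε : ℝ, 0 < ε →
      (∃ y ∈ E, y ≠ x ∧ |y - x| < ε) ∨ ∃ n, A n = x ∧ x < B n := by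
    intro x hx hxj ε hε
    set y : ℝ := x + min ε (A j - x) / 2 with hy
    have hmin : 0 < min ε (A j - x) := lt_min hε (by linarith)
    have hxy : x < y := by simp only [hy]; linarith
    have hyAj : y < A j := by
      have h := min_le_right ε (A j - x)
      simp only [hy]; linarith
    have hyε : y - x < ε := by
      have h := min_le_left ε (A j - x)
      simp only [hy]; linarith
    have hyIcc : y ∈ Icc (B i) (A j) := ⟨le_trans hx.1.1 hxy.le, hyAj.le⟩
    by_cases hyS : y ∈ ⋃ m, Ioo (A m) (B m)
    · rcases mem_iUnion.mp hyS with ⟨n, hn⟩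
      have hxAn : x ≤ A n := by
        by_contra h
        push_neg at h
        exact hx.2 (mem_iUnion.mpr ⟨n, h, lt_trans hxy hn.2⟩)
      rcases eq_or_lt_of_le hxAn with heq | hlt'
      · exact Or.inr ⟨n, heq.symm, lt_trans hxy hn.2⟩
      · left
        refine ⟨A n, ⟨⟨le_trans hx.1.1 hlt'.le, le_trans hn.1.le hyAj.le⟩,
          hnotS n (A n) ⟨le_refl _, hAB n⟩ (fun h => lt_irrefl _ h.1)⟩, hlt'.ne', ?_⟩
        rw [abs_sub_lt_iff]
        constructor <;> linarith [hn.1]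
    · exact Or.inl ⟨y, ⟨hyIcc, hyS⟩, hxy.ne', by rw [abs_sub_lt_iff]; constructor <;> linarith⟩
  -- the key left-approximation lemma
  have hleft : ∀ x ∈ E, B i < x → ∀ ε : ℝ, 0 < ε →
      (∃ y ∈ E, y ≠ x ∧ |y - x| < ε) ∨ ∃ n, B n = x ∧ A n < x := by
    intro x hx hxi ε hε
    set y : ℝ := x - min ε (x - B i) / 2 with hy
    have hmin : 0 < min ε (x - B i) := lt_min hε (by linarith)
    have hxy : y < x := by simp only [hy]; linarith
    have hyBi : B i < y := by
      have h := min_le_right ε (x - B i)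
      simp only [hy]; linarith
    have hyε : x - y < ε := by
      have h := min_le_left ε (x - B i)
      simp only [hy]; linarith
    have hyIcc : y ∈ Icc (B i) (A j) := ⟨hyBi.le, le_trans hxy.le hx.1.2⟩
    by_cases hyS : y ∈ ⋃ m, Ioo (A m) (B m)
    · rcases mem_iUnion.mp hyS with ⟨n, hn⟩
      have hxBn : B n ≤ x := by
        by_contra h
        push_neg at h
        exact hx.2 (mem_iUnion.mpr ⟨n, lt_trans hn.1 hxy, h⟩)
      rcases eq_or_lt_of_le hxBn with heq | hlt'
      · exact Or.inr ⟨n, heq, lt_trans hn.1 hxy⟩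
      · left
        refine ⟨B n, ⟨⟨le_trans hyBi.le hn.2.le, le_trans hlt'.le hx.1.2⟩,
          hnotS n (B n) ⟨hAB n, le_refl _⟩ (fun h => lt_irrefl _ h.2)⟩, hlt'.ne, ?_⟩
        rw [abs_sub_lt_iff]
        constructor <;> linarith [hn.2]
    · exact Or.inl ⟨y, ⟨hyIcc, hyS⟩, hxy.ne, by rw [abs_sub_lt_iff]; constructor <;> linarith⟩
  -- E is perfect
  have hperf : Perfect E := by
    refine ⟨hclosed, fun x hx => ?_⟩
    rw [accPt_iff_nhds]
    intro U hU
    rcases Metric.mem_nhds_iff.mp hU with ⟨ε, hε, hball⟩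
    have hnear : ∃ y ∈ E, y ≠ x ∧ |y - x| < ε := by
      rcases eq_or_lt_of_le hx.1.2 with heq | hxj
      · -- x = A j, use the left lemma
        rcases hleft x hx (heq ▸ hlt) ε hε with h | ⟨m, hBm, hAm⟩
        · exact h
        · exfalso
          have hxm : x ∈ Icc (A m) (B m) := ⟨hAm.le, hBm.ge⟩
          have hxj' : x ∈ Icc (A j) (B j) := ⟨heq.ge, heq ▸ hAB j⟩
          have hmj : m ≠ j := by
            intro h
            rw [h] at hAm
            linarith [heq.le]
          exact hdisj' hmj hxm hxj'
      · rcases hright x hx hxj ε hε with h | ⟨n, hAn, hBn⟩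
        · exact h
        · rcases eq_or_lt_of_le hx.1.1 with heq | hxi
          · -- x = B i
            exfalso
            have hxn : x ∈ Icc (A n) (B n) := ⟨hAn.le, hBn.le⟩
            have hxi' : x ∈ Icc (A i) (B i) := ⟨heq ▸ hAB i, heq.ge⟩
            have hni : n ≠ i := by
              intro h
              rw [h] at hBn
              linarith [heq.le]
            exact hdisj' hni hxn hxi'
          · rcases hleft x hx hxi ε hε with h | ⟨m, hBm, hAm⟩
            · exact h
            · exfalso
              have hxm : x ∈ Icc (A m) (B m) := ⟨hAm.le, hBm.ge⟩
              have hxn : x ∈ Icc (A n) (B n) := ⟨hAn.le, hBn.le⟩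
              have hmn : m ≠ n := by
                intro h
                rw [h] at hAm
                linarith [hAn.le]
              exact hdisj' hmn hxm hxn
    rcases hnear with ⟨y, hyE, hyx, hyd⟩
    exact ⟨y, ⟨hball (by rwa [Metric.mem_ball, Real.dist_eq]), hyE⟩, hyx⟩
  have hne : E.Nonempty :=
    ⟨B i, ⟨le_refl _, hlt.le⟩, hnotS i (B i) ⟨hAB i, le_refl _⟩ (fun h => lt_irrefl _ h.2)⟩
  -- E is countable if the residual set is countable
  have hBiab : B i ∈ Icc a b := hsub i ⟨hAB i, le_refl _⟩
  have hAjab : A j ∈ Icc a b := hsub j ⟨le_refl _, hAB j⟩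
  have hEsub : E ⊆ (Icc a b \ ⋃ n, Icc (A n) (B n)) ∪ (range A ∪ range B) := by
    intro x hx
    have hxab : x ∈ Icc a b := ⟨le_trans hBiab.1 hx.1.1, le_trans hx.1.2 hAjab.2⟩
    by_cases hxU : x ∈ ⋃ n, Icc (A n) (B n)
    · rcases mem_iUnion.mp hxU with ⟨n, hn⟩
      have hxO : x ∉ Ioo (A n) (B n) := fun h => hx.2 (mem_iUnion.mpr ⟨n, h⟩)
      rcases eq_or_lt_of_le hn.1 with heq | h1
      · exact Or.inr (Or.inl ⟨n, heq⟩)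
      · rcases eq_or_lt_of_le hn.2 with heq | h2
        · exact Or.inr (Or.inr ⟨n, heq.symm⟩)
        · exact absurd ⟨h1, h2⟩ hxO
    · exact Or.inl ⟨hxab, hxU⟩
  have hEcount : E.Countable :=
    (hcount.union ((countable_range A).union (countable_range B))).mono hEsub
  -- perfect nonempty sets are uncountable
  obtain ⟨f, hfrange, _, hfinj⟩ := hperf.exists_nat_bool_injection hne
  have huniv : (Set.univ : Set (ℕ → Bool)).Countable := by
    have := (hEcount.mono hfrange).preimage hfinj
    simpa using this
  have hcnt : Countable (ℕ → Bool) := Set.countable_univ_iff.mp huniv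
  classical
  obtain ⟨g, hg⟩ := exists_injective_nat (ℕ → Bool)
  exact Function.cantor_injective (fun s => g fun n => decide (n ∈ s))
    fun s t hst => by
      have h := hg hst
      ext n
      simpa using congrFun h n
end

section
/- For every nonempty perfect nowhere dense (Cantor-type) closed set K ⊆ ℝ, there exists a continuous nondecreasing function c_K : ℝ → ℝ whose induced Lebesgue–Stieltjes measure dc_K is nonzero and has topological support exactly K. -/
open MeasureTheory Set ENNReal

lemma aux_exists_atomless_prob (P : Set ℝ) (hP : Perfect P) (hne : P.Nonempty) :
    ∃ ν : Measure ℝ, IsProbabilityMeasure ν ∧ (∀ r : ℝ, ν {r} = 0) ∧ ν Pᶜ = 0 := by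
  obtain ⟨f, hrange, hcont, hinj⟩ := hP.exists_nat_bool_injection hne
  have hℝ : ¬Countable ℝ := not_countable
  let e : ℝ ≃ᵐ (ℕ → Bool) := PolishSpace.measurableEquivNatBoolOfNotCountable hℝ
  let g : ℝ → ℝ := f ∘ e
  have hg : Measurable g := hcont.measurable.comp e.measurable
  have hPM : IsProbabilityMeasure (volume.restrict (Ioc (0:ℝ) 1)) := by
    constructor; simp
  refine ⟨Measure.map g (volume.restrict (Ioc (0:ℝ) 1)), ?_, ?_, ?_⟩
  · exact Measure.isProbabilityMeasure_map hg.aemeasurable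
  · intro r
    rw [Measure.map_apply hg (measurableSet_singleton r)]
    have hsub : (g ⁻¹' {r}).Subsingleton := by
      intro a ha b hb
      simp only [g, mem_preimage, Function.comp_apply, mem_singleton_iff] at ha hb
      exact e.injective (hinj (ha.trans hb.symm))
    exact hsub.measure_zero _
  · rw [Measure.map_apply hg hP.closed.measurableSet.compl]
    have : g ⁻¹' Pᶜ = ∅ := by
      ext a
      simp only [g, mem_preimage, Function.comp_apply, mem_compl_iff, mem_empty_iff_false,
        iff_false, not_not]
      exact hrange ⟨e a, rfl⟩
    simp [this]

/-- For every nonempty perfect nowhere dense closed set `K ⊆ ℝ` there is a continuous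
nondecreasing function `c_K : ℝ → ℝ` whose Lebesgue–Stieltjes measure is nonzero and has
topological support exactly `K` (it vanishes off `K` and is positive on every neighbourhood
of every point of `K`). -/
theorem stmt_13 (K : Set ℝ) (hK_ne : K.Nonempty) (hK_perfect : Perfect K)
    (hK_nd : IsNowhereDense K) :
    ∃ c : StieltjesFunction ℝ, Continuous c ∧ Monotone c ∧
      c.measure ≠ 0 ∧ c.measure Kᶜ = 0 ∧
      ∀ x ∈ K, ∀ ε > (0 : ℝ), 0 < c.measure (Ioo (x - ε) (x + ε)) := by
  obtain ⟨x0, hx0⟩ := hK_ne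
  set S : Set (ℚ × ℚ) := {pq | (Ioo ((pq.1 : ℝ)) ((pq.2 : ℝ)) ∩ K).Nonempty} with hS
  have hSc : S.Countable := Set.to_countable S
  have hSne : S.Nonempty := by
    obtain ⟨p, hp⟩ := exists_rat_lt x0
    obtain ⟨q, hq⟩ := exists_rat_gt x0
    exact ⟨(p, q), ⟨x0, ⟨hp, hq⟩, hx0⟩⟩
  obtain ⟨g, hg⟩ := hSc.exists_eq_range hSne
  set P : ℕ → Set ℝ := fun n => closure (Ioo (((g n).1 : ℝ)) (((g n).2 : ℝ)) ∩ K) with hPdef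
  have hPn : ∀ n, Perfect (P n) ∧ (P n).Nonempty := by
    intro n
    have hmem : g n ∈ S := hg ▸ mem_range_self n
    obtain ⟨x, hxU, hxK⟩ := hmem
    exact hK_perfect.closure_nhds_inter x hxK hxU isOpen_Ioo
  choose ν hprob hatom hcompl using fun n =>
    aux_exists_atomless_prob (P n) (hPn n).1 (hPn n).2
  have hPK : ∀ n, P n ⊆ K := fun n =>
    closure_minimal inter_subset_right hK_perfect.closed
  set μ : Measure ℝ := Measure.sum (fun n => ((2 : ℝ≥0∞)⁻¹ ^ (n + 1)) • ν n) with hμdef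
  have hw_ne : ∀ n : ℕ, ((2 : ℝ≥0∞)⁻¹ ^ (n + 1)) ≠ 0 := fun n =>
    pow_ne_zero _ (ENNReal.inv_ne_zero.2 (by norm_num))
  have hμuniv : μ univ = 1 := by
    have := fun n => hprob n
    rw [hμdef, Measure.sum_apply _ MeasurableSet.univ]
    simp only [Measure.smul_apply, smul_eq_mul, measure_univ, mul_one]
    calc ∑' n : ℕ, (2 : ℝ≥0∞)⁻¹ ^ (n + 1)
        = ∑' n : ℕ, (2 : ℝ≥0∞)⁻¹ * (2⁻¹) ^ n := by
          congr 1; ext n; rw [pow_succ, mul_comm]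
      _ = (2 : ℝ≥0∞)⁻¹ * ∑' n : ℕ, (2⁻¹ : ℝ≥0∞) ^ n := ENNReal.tsum_mul_left
      _ = (2 : ℝ≥0∞)⁻¹ * 2 := by
          rw [ENNReal.tsum_geometric, ENNReal.one_sub_inv_two, inv_inv]
      _ = 1 := ENNReal.inv_mul_cancel (by norm_num) (by norm_num)
  have hμprob : IsProbabilityMeasure μ := ⟨hμuniv⟩
  have hμatom : ∀ r : ℝ, μ {r} = 0 := by
    intro r
    rw [hμdef, Measure.sum_apply _ (measurableSet_singleton r)]
    simp [hatom]
  have hμKc : μ Kᶜ = 0 := by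
    have h1 : ∀ n, ν n Kᶜ = 0 := fun n =>
      measure_mono_null (compl_subset_compl.2 (hPK n)) (hcompl n)
    rw [hμdef, Measure.sum_apply _ hK_perfect.closed.measurableSet.compl]
    simp [h1]
  set c := ProbabilityTheory.cdf μ with hc
  have hmeas : c.measure = μ := ProbabilityTheory.measure_cdf μ
  have hll : ∀ x : ℝ, Function.leftLim c x = c x := by
    intro x
    have h0 : c.measure {x} = 0 := hmeas ▸ hμatom x
    rw [c.measure_singleton] at h0
    have h1 : c x - Function.leftLim c x ≤ 0 := by
      by_contra h
      push_neg at h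
      exact (ENNReal.ofReal_pos.2 h).ne' h0
    have h2 : Function.leftLim c x ≤ c x := c.mono.leftLim_le le_rfl
    linarith
  have hcont : Continuous c := by
    rw [continuous_iff_continuousAt]
    intro x
    rw [c.mono.continuousAt_iff_leftLim_eq_rightLim, hll x, c.rightLim_eq]
  refine ⟨c, hcont, c.mono, ?_, hmeas ▸ hμKc, ?_⟩
  · rw [hmeas]
    exact hμprob.ne_zero
  · intro x hx ε hε
    obtain ⟨p, hp1, hp2⟩ := exists_rat_btwn (show x - ε < x by linarith)
    obtain ⟨q, hq1, hq2⟩ := exists_rat_btwn (show x < x + ε by linarith)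
    have hmem : (p, q) ∈ S := ⟨x, ⟨hp2, hq1⟩, hx⟩
    rw [hg] at hmem
    obtain ⟨n, hn⟩ := hmem
    have hPsub : P n ⊆ Ioo (x - ε) (x + ε) := by
      have h0 : Ioo ((p:ℝ)) ((q:ℝ)) ∩ K ⊆ Icc ((p:ℝ)) ((q:ℝ)) := fun y hy =>
        ⟨hy.1.1.le, hy.1.2.le⟩
      have hcl : closure (Ioo ((p:ℝ)) ((q:ℝ)) ∩ K) ⊆ Icc ((p:ℝ)) ((q:ℝ)) :=
        closure_minimal h0 isClosed_Icc
      have h2 : Icc ((p:ℝ)) ((q:ℝ)) ⊆ Ioo (x - ε) (x + ε) := fun y hy =>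
        ⟨lt_of_lt_of_le hp1 hy.1, lt_of_le_of_lt hy.2 hq2⟩
      have hPeq : P n = closure (Ioo ((p:ℝ)) ((q:ℝ)) ∩ K) := by rw [hPdef]; simp [hn]
      rw [hPeq]; exact hcl.trans h2
    have h1 : ν n (Ioo (x - ε) (x + ε)) = 1 := by
      have hc0 : ν n ((Ioo (x - ε) (x + ε))ᶜ) = 0 :=
        measure_mono_null (compl_subset_compl.2 hPsub) (hcompl n)
      have h3 := measure_add_measure_compl (μ := ν n)
        (measurableSet_Ioo (a := x - ε) (b := x + ε))
      rw [hc0, add_zero, measure_univ] at h3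
      exact h3
    rw [hmeas]
    have hle : (((2 : ℝ≥0∞)⁻¹ ^ (n + 1)) • ν n) (Ioo (x - ε) (x + ε)) ≤
        μ (Ioo (x - ε) (x + ε)) := by
      rw [hμdef]
      exact Measure.le_sum _ n _
    rw [Measure.smul_apply, smul_eq_mul, h1, mul_one] at hle
    exact lt_of_lt_of_le (pos_iff_ne_zero.2 (hw_ne n)) hle
end
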